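/- Let Q be a loopy Laplacian of a directed graph and α a reachable subset. Then the right accompanying matrix Q_rac = −Q[αᶜ,αᶜ]^{-1} Q[αᶜ,α] and the left accompanying matrix Q_lac = −Q[α,αᶜ] Q[αᶜ,αᶜ]^{-1} are entrywise nonnegative. -/

import Mathlib

open Matrix Finset

/-- The submatrix of `A` with rows in `s` and columns in `t`. -/
noncomputable def subm {ι : Type*} [Fintype ι] [DecidableEq ι]
    (A : Matrix ι ι ℝ) (s t : Finset ι) : Matrix s t ℝ :=
  Matrix.of fun i j => A i j

/-- The Schur complement `A/A[αᶜ,αᶜ]`, i.e. the Kron reduction keeping the nodes of `α`. -/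
noncomputable def schur {ι : Type*} [Fintype ι] [DecidableEq ι]
    (A : Matrix ι ι ℝ) (α : Finset ι) : Matrix α α ℝ :=
  subm A α α - subm A α αᶜ * (subm A αᶜ αᶜ)⁻¹ * subm A αᶜ α

section Aux

variable {n : ℕ} (Q : Matrix (Fin n) (Fin n) ℝ)
    (hZ : ∀ i j, i ≠ j → Q i j ≤ 0) (hrow : ∀ i, 0 ≤ ∑ j, Q i j)
    (α : Finset (Fin n))
    (hreach : ∀ i ∉ α, ∃ j ∈ α, Relation.ReflTransGen (fun u v => Q u v < 0) i j)

include hZ hrow hreach in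
/-- Monotonicity: `Q[αᶜ,αᶜ] x ≥ 0` entrywise implies `x ≥ 0` entrywise. -/
lemma key_mono (x : (αᶜ : Finset (Fin n)) → ℝ)
    (hx : ∀ i, 0 ≤ (subm Q αᶜ αᶜ *ᵥ x) i) : ∀ i, 0 ≤ x i := by
  by_contra hcon
  push_neg at hcon
  obtain ⟨i₁, hi₁⟩ := hcon
  obtain ⟨i₀, -, hmin⟩ := Finset.exists_min_image Finset.univ x ⟨i₁, Finset.mem_univ i₁⟩
  set m := x i₀ with hm
  have hm0 : m < 0 := lt_of_le_of_lt (hmin i₁ (Finset.mem_univ i₁)) hi₁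
  -- Step claim: the minimum propagates along negative edges, never entering α.
  have claim : ∀ i : (αᶜ : Finset (Fin n)), x i = m →
      ∀ c : Fin n, Q i c < 0 → ∃ hc : c ∈ αᶜ, x ⟨c, hc⟩ = m := by
    intro i hxi c hQc
    have hge : (0:ℝ) ≤ ∑ j : (αᶜ : Finset (Fin n)), Q i j * x j := by
      have := hx i
      simpa [Matrix.mulVec, dotProduct, subm] using this
    have hterm : ∀ j : (αᶜ : Finset (Fin n)), Q i j * x j ≤ Q i j * m := by
      intro j
      by_cases hji : j = i
      · subst hji; rw [hxi]
      · have h1 : Q i j ≤ 0 := hZ _ _ (fun h => hji (Subtype.ext h.symm))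
        exact mul_le_mul_of_nonpos_left (hmin j (Finset.mem_univ j)) h1
    have hαnonpos : ∀ j ∈ α, Q i j ≤ 0 := by
      intro j hj
      refine hZ _ _ (fun h => (Finset.mem_compl.mp i.2) ?_)
      rw [h]; exact hj
    have hα : ∑ j ∈ α, Q i j ≤ 0 := Finset.sum_nonpos hαnonpos
    have hsplit : ∑ j ∈ α, Q (i : Fin n) j + ∑ j ∈ αᶜ, Q (i : Fin n) j = ∑ j, Q (i : Fin n) j :=
      Finset.sum_add_sum_compl α _
    have hrowi := hrow (i : Fin n)
    have hcompl_nonneg : (0:ℝ) ≤ ∑ j ∈ αᶜ, Q i j := by linarith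
    have hsum_m : ∑ j : (αᶜ : Finset (Fin n)), Q i j * m = (∑ j ∈ αᶜ, Q (i : Fin n) j) * m := by
      rw [← Finset.sum_mul, Finset.sum_coe_sort]
    have hle : ∑ j : (αᶜ : Finset (Fin n)), Q i j * m ≤ 0 := by
      rw [hsum_m]
      exact mul_nonpos_iff.mpr (Or.inl ⟨hcompl_nonneg, hm0.le⟩)
    have hsum_le : ∑ j : (αᶜ : Finset (Fin n)), Q i j * x j ≤
        ∑ j : (αᶜ : Finset (Fin n)), Q i j * m :=
      Finset.sum_le_sum (fun j _ => hterm j)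
    -- everything collapses to equalities
    have heq : ∑ j : (αᶜ : Finset (Fin n)), Q i j * x j =
        ∑ j : (αᶜ : Finset (Fin n)), Q i j * m := le_antisymm hsum_le (by linarith)
    have hzero : (∑ j ∈ αᶜ, Q (i : Fin n) j) * m = 0 := by
      rw [← hsum_m]; linarith
    have hcompl_zero : ∑ j ∈ αᶜ, Q (i : Fin n) j = 0 :=
      (mul_eq_zero.mp hzero).resolve_right hm0.ne
    have hα_zero : ∀ j ∈ α, Q (i : Fin n) j = 0 := by
      have : ∑ j ∈ α, Q (i : Fin n) j = 0 := by
        by_contra hne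
        have : ∑ j ∈ α, Q (i : Fin n) j < 0 := lt_of_le_of_ne hα hne
        linarith
      exact (Finset.sum_eq_zero_iff_of_nonpos hαnonpos).mp this
    by_cases hcα : c ∈ α
    · exact absurd (hα_zero c hcα) hQc.ne
    · have hc : c ∈ αᶜ := Finset.mem_compl.mpr hcα
      refine ⟨hc, ?_⟩
      have := (Finset.sum_eq_sum_iff_of_le (fun j _ => hterm j)).mp heq
        ⟨c, hc⟩ (Finset.mem_univ _)
      exact mul_left_cancel₀ hQc.ne this
  -- propagate along the reachability path
  have hi₀c : (i₀ : Fin n) ∉ α := Finset.mem_compl.mp i₀.2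
  obtain ⟨jend, hjend, hpath⟩ := hreach i₀ hi₀c
  have prop : ∀ b, Relation.ReflTransGen (fun u v => Q u v < 0) (i₀ : Fin n) b →
      ∃ hb : b ∈ αᶜ, x ⟨b, hb⟩ = m := by
    intro b hb
    induction hb with
    | refl => exact ⟨i₀.2, by simp [hm]⟩
    | @tail b c hab hbc ih =>
      obtain ⟨hb, hxb⟩ := ih
      exact claim ⟨b, hb⟩ hxb c hbc
  obtain ⟨hjc, -⟩ := prop jend hpath
  exact (Finset.mem_compl.mp hjc) hjend

include hZ hrow hreach in
lemma det_isUnit : IsUnit (subm Q αᶜ αᶜ).det := by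
  rw [isUnit_iff_ne_zero]
  intro hdet
  obtain ⟨v, hv0, hv⟩ := Matrix.exists_mulVec_eq_zero_iff.mpr hdet
  have h1 := key_mono Q hZ hrow α hreach v (fun i => by rw [hv]; simp)
  have h2 := key_mono Q hZ hrow α hreach (-v)
    (fun i => by rw [Matrix.mulVec_neg, hv]; simp)
  apply hv0
  funext i
  have := h2 i
  simp only [Pi.neg_apply, Pi.zero_apply, Left.nonneg_neg_iff] at this
  exact le_antisymm this (h1 i)

include hZ hrow hreach in
lemma inv_entry_nonneg : ∀ i j, 0 ≤ (subm Q αᶜ αᶜ)⁻¹ i j := by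
  intro i j
  have hdet := det_isUnit Q hZ hrow α hreach
  have hmul := Matrix.mul_nonsing_inv _ hdet
  have := key_mono Q hZ hrow α hreach (fun k => (subm Q αᶜ αᶜ)⁻¹ k j) (fun i => by
    have h : (subm Q αᶜ αᶜ *ᵥ fun k => (subm Q αᶜ αᶜ)⁻¹ k j) i
        = (subm Q αᶜ αᶜ * (subm Q αᶜ αᶜ)⁻¹) i j := by
      simp [Matrix.mulVec, Matrix.mul_apply, dotProduct]
    rw [h, hmul]
    by_cases hij : i = j <;> simp [Matrix.one_apply, hij])
  exact this i

end Aux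

/-- The right and left accompanying matrices of the Kron reduction of a loopy Laplacian
with respect to a reachable subset are entrywise nonnegative. -/
theorem accompanying_matrices_nonneg {n : ℕ} (Q : Matrix (Fin n) (Fin n) ℝ)
    (hZ : ∀ i j, i ≠ j → Q i j ≤ 0) (hrow : ∀ i, 0 ≤ ∑ j, Q i j)
    (α : Finset (Fin n))
    (hreach : ∀ i ∉ α, ∃ j ∈ α, Relation.ReflTransGen (fun u v => Q u v < 0) i j) :
    (∀ (i : (αᶜ : Finset (Fin n))) (j : α), 0 ≤ (-((subm Q αᶜ αᶜ)⁻¹ * subm Q αᶜ α)) i j) ∧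
    (∀ (i : α) (j : (αᶜ : Finset (Fin n))), 0 ≤ (-(subm Q α αᶜ * (subm Q αᶜ αᶜ)⁻¹)) i j) := by
  have hinv := inv_entry_nonneg Q hZ hrow α hreach
  have hoffR : ∀ (k : (αᶜ : Finset (Fin n))) (j : α), subm Q αᶜ α k j ≤ 0 := by
    intro k j
    refine hZ _ _ (fun h => (Finset.mem_compl.mp k.2) ?_)
    rw [h]; exact j.2
  have hoffL : ∀ (i : α) (k : (αᶜ : Finset (Fin n))), subm Q α αᶜ i k ≤ 0 := by
    intro i k
    refine hZ _ _ (fun h => (Finset.mem_compl.mp k.2) ?_)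
    rw [← h]; exact i.2
  constructor
  · intro i j
    have : (-((subm Q αᶜ αᶜ)⁻¹ * subm Q αᶜ α)) i j
        = ∑ k, (subm Q αᶜ αᶜ)⁻¹ i k * (-(subm Q αᶜ α k j)) := by
      simp [Matrix.mul_apply, mul_comm, Finset.sum_neg_distrib]
    rw [this]
    exact Finset.sum_nonneg fun k _ =>
      mul_nonneg (hinv i k) (neg_nonneg.mpr (hoffR k j))
  · intro i j
    have : (-(subm Q α αᶜ * (subm Q αᶜ αᶜ)⁻¹)) i j
        = ∑ k, (-(subm Q α αᶜ i k)) * (subm Q αᶜ αᶜ)⁻¹ k j := by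
      simp [Matrix.mul_apply, Finset.sum_neg_distrib]
    rw [this]
    exact Finset.sum_nonneg fun k _ =>
      mul_nonneg (neg_nonneg.mpr (hoffL i k)) (hinv k j)
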